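/- arXiv:2009.13781 — 5 statements merged into one kernel-verified Lean document; each statement's English description precedes it below -/
import Mathlib

section
/- Let X be a real random variable and a ≥ 0 a real number such that P(X = 0) ≥ a and P(X = 1) ≥ a. Then for every real t with |t| ≤ π, the characteristic function satisfies |E e^{itX}| ≤ 1 − (a/π²)·t² ≤ e^{−a·π^{−2}·t²}. -/
set_option maxHeartbeats 1000000

open MeasureTheory

lemma jordan_bound {u : ℝ} (h0 : 0 ≤ u) (hu : u ≤ Real.pi) :
    u ^ 2 / Real.pi ^ 2 ≤ 2 * (1 - Real.cos (u / 2)) := by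
  have hpi := Real.pi_pos
  have hs : 2 / Real.pi * (u / 4) ≤ Real.sin (u / 4) :=
    Real.mul_le_sin (by linarith) (by linarith)
  have hcos : Real.cos (u / 2) = 1 - 2 * Real.sin (u / 4) ^ 2 := by
    have h1 := Real.cos_two_mul (u / 4)
    have h2 := Real.sin_sq_add_cos_sq (u / 4)
    have : (2 : ℝ) * (u / 4) = u / 2 := by ring
    rw [this] at h1
    nlinarith
  have hpos : 0 ≤ 2 / Real.pi * (u / 4) := by positivity
  rw [hcos]
  have hsq : (2 / Real.pi * (u / 4)) ^ 2 ≤ Real.sin (u / 4) ^ 2 := by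
    nlinarith
  have hpi2 : (0:ℝ) < Real.pi ^ 2 := by positivity
  rw [div_le_iff₀ hpi2]
  have hexpand : (2 / Real.pi * (u / 4)) ^ 2 = u ^ 2 / (4 * Real.pi ^ 2) := by
    field_simp; ring
  rw [hexpand] at hsq
  have h4 : u ^ 2 / (4 * Real.pi ^ 2) * (4 * Real.pi ^ 2) = u ^ 2 := by
    field_simp
  nlinarith [hsq, hpi2, h4]

theorem stmt6 {Ω : Type*} [MeasurableSpace Ω] (μ : Measure Ω) [IsProbabilityMeasure μ]
    (X : Ω → ℝ) (hX : Measurable X) (a : ℝ) (ha : 0 ≤ a)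
    (h0 : ENNReal.ofReal a ≤ μ {ω | X ω = 0})
    (h1 : ENNReal.ofReal a ≤ μ {ω | X ω = 1}) :
    ∀ t : ℝ, |t| ≤ Real.pi →
      ‖∫ ω, Complex.exp (Complex.I * t * X ω) ∂μ‖ ≤ 1 - (a / Real.pi ^ 2) * t ^ 2 ∧
      1 - (a / Real.pi ^ 2) * t ^ 2 ≤ Real.exp (-(a / Real.pi ^ 2 * t ^ 2)) := by
  intro t ht
  have hpi := Real.pi_pos
  have hpi2 : (0:ℝ) < Real.pi ^ 2 := by positivity
  refine ⟨?_, by linarith [Real.add_one_le_exp (-(a / Real.pi ^ 2 * t ^ 2))]⟩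
  -- setup
  set f : Ω → ℂ := fun ω => Complex.exp (Complex.I * t * X ω) with hf
  have hf_norm : ∀ ω, ‖f ω‖ = 1 := by
    intro ω
    simp [hf, Complex.norm_exp]
  have hmeas : AEStronglyMeasurable f μ := by
    apply Measurable.aestronglyMeasurable
    exact Complex.measurable_exp.comp (measurable_const.mul (Complex.measurable_ofReal.comp hX))
  have hint : Integrable f μ :=
    (integrable_const (1:ℝ)).mono' hmeas (Filter.Eventually.of_forall fun ω => (hf_norm ω).le)
  set z := ∫ ω, f ω ∂μ with hz
  set c : ℂ := Complex.exp (-(z.arg) * Complex.I) with hcdef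
  have hc : ‖c‖ = 1 := by
    simp [hcdef, Complex.norm_exp]
  have hcz : c * z = ((‖z‖ : ℝ) : ℂ) := by
    conv_lhs => rw [show z = _ from (Complex.norm_mul_exp_arg_mul_I z).symm]
    rw [hcdef, mul_comm, mul_assoc, ← Complex.exp_add]
    ring_nf
    simp
  -- sets
  set A : Set Ω := {ω | X ω = 0} with hAdef
  set B : Set Ω := {ω | X ω = 1} with hBdef
  have hA : MeasurableSet A := hX (measurableSet_singleton 0)
  have hB : MeasurableSet B := hX (measurableSet_singleton 1)
  set s1 : ℝ := 1 - c.re with hs1def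
  set s2 : ℝ := 1 - (c * Complex.exp (Complex.I * t)).re with hs2def
  have hs1 : 0 ≤ s1 := by
    have := Complex.re_le_norm c
    rw [hc] at this
    linarith
  have hs2 : 0 ≤ s2 := by
    have h := Complex.re_le_norm (c * Complex.exp (Complex.I * t))
    have : ‖c * Complex.exp (Complex.I * t)‖ = 1 := by
      rw [norm_mul, hc, one_mul, Complex.norm_exp]
      simp
    rw [this] at h
    linarith
  -- pointwise bound
  set g : Ω → ℝ := fun ω =>
    1 - A.indicator (fun _ => s1) ω - B.indicator (fun _ => s2) ω with hgdef
  have hptw : ∀ ω, (c * f ω).re ≤ g ω := by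
    intro ω
    by_cases hω0 : X ω = 0
    · have hωB : ω ∉ B := by simp [hBdef, hω0]
      have : f ω = 1 := by simp [hf, hω0]
      simp [hgdef, this, Set.indicator_of_mem (show ω ∈ A from hω0),
        Set.indicator_of_notMem hωB, hs1def]
    · by_cases hω1 : X ω = 1
      · have hωA : ω ∉ A := by simp [hAdef, hω1]
        have : f ω = Complex.exp (Complex.I * t) := by simp [hf, hω1]
        simp [hgdef, this, Set.indicator_of_mem (show ω ∈ B from hω1),
          Set.indicator_of_notMem hωA, hs2def]
      · have hωA : ω ∉ A := hω0
        have hωB : ω ∉ B := hω1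
        have h := Complex.re_le_norm (c * f ω)
        have habs : ‖c * f ω‖ = 1 := by
          rw [norm_mul, hc, one_mul, hf_norm]
        rw [habs] at h
        have hgω : g ω = 1 := by
          simp [hgdef, Set.indicator_of_notMem hωA, Set.indicator_of_notMem hωB]
        rw [hgω]
        exact h
  -- integrability
  have hiA : Integrable (A.indicator fun _ => s1) μ := (integrable_const s1).indicator hA
  have hiB : Integrable (B.indicator fun _ => s2) μ := (integrable_const s2).indicator hB
  have hig : Integrable g μ := ((integrable_const (1:ℝ)).sub hiA).sub hiB
  set pA : ℝ := (μ A).toReal with hpAdef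
  set pB : ℝ := (μ B).toReal with hpBdef
  have hpA : a ≤ pA := by
    rw [hpAdef]
    exact (ENNReal.ofReal_le_iff_le_toReal (measure_ne_top μ A)).mp h0
  have hpB : a ≤ pB := by
    rw [hpBdef]
    exact (ENNReal.ofReal_le_iff_le_toReal (measure_ne_top μ B)).mp h1
  have hgint : ∫ ω, g ω ∂μ = 1 - s1 * pA - s2 * pB := by
    rw [hgdef]
    rw [integral_sub (show Integrable (fun ω => 1 - A.indicator (fun _ => s1) ω) μ from
        (integrable_const (1:ℝ)).sub hiA) hiB,
      integral_sub (integrable_const (1:ℝ)) hiA,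
      integral_indicator_const _ hA, integral_indicator_const _ hB]
    simp [mul_comm, smul_eq_mul]
    rfl
  -- norm equals integral of re
  have hnorm : ‖z‖ = ∫ ω, (c * f ω).re ∂μ := by
    have h1 : c * z = ∫ ω, c * f ω ∂μ := by
      rw [hz, integral_const_mul]
    have h2 : (∫ ω, c * f ω ∂μ).re = ∫ ω, (c * f ω).re ∂μ :=
      (integral_re (hint.const_mul c)).symm
    rw [← h2, ← h1, hcz]
    simp
  have hmono : ∫ ω, (c * f ω).re ∂μ ≤ ∫ ω, g ω ∂μ :=
    integral_mono (hint.const_mul c).re hig hptw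
  -- lower bound on s1 + s2
  have hsum : t ^ 2 / Real.pi ^ 2 ≤ s1 + s2 := by
    have hre : s1 + s2 = 2 - (c * (1 + Complex.exp (Complex.I * t))).re := by
      rw [hs1def, hs2def, mul_add, Complex.add_re, mul_one]
      ring
    have habs1 : ‖1 + Complex.exp (Complex.I * t)‖ = 2 * Real.cos (t / 2) := by
      have hexp : Complex.exp (Complex.I * t) = (Real.cos t : ℂ) + (Real.sin t : ℂ) * Complex.I := by
        rw [mul_comm, Complex.exp_mul_I]
        simp [Complex.ofReal_cos, Complex.ofReal_sin]
      rw [hexp, show ((1:ℂ) + ((Real.cos t : ℂ) + (Real.sin t : ℂ) * Complex.I)) =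
        ((1 + Real.cos t : ℝ) : ℂ) + ((Real.sin t : ℝ) : ℂ) * Complex.I by push_cast; ring,
        Complex.norm_add_mul_I]
      have hc2 : Real.cos t = 2 * Real.cos (t / 2) ^ 2 - 1 := by
        have h1 := Real.cos_two_mul (t / 2)
        rw [show (2:ℝ) * (t / 2) = t by ring] at h1
        linarith
      have hsin : Real.sin t ^ 2 = 1 - Real.cos t ^ 2 := by
        have := Real.sin_sq_add_cos_sq t
        linarith
      have hcosnn : 0 ≤ Real.cos (t / 2) := by
        apply Real.cos_nonneg_of_neg_pi_div_two_le_of_le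
        · linarith [neg_abs_le t]
        · linarith [le_abs_self t]
      rw [show (1 + Real.cos t) ^ 2 + Real.sin t ^ 2 = (2 * Real.cos (t / 2)) ^ 2 by
        rw [hsin]; nlinarith]
      exact Real.sqrt_sq (by linarith)
    have hreabs : (c * (1 + Complex.exp (Complex.I * t))).re ≤ 2 * Real.cos (t / 2) := by
      calc (c * (1 + Complex.exp (Complex.I * t))).re
          ≤ ‖c * (1 + Complex.exp (Complex.I * t))‖ := Complex.re_le_norm _
        _ = 2 * Real.cos (t / 2) := by
            rw [norm_mul, hc, one_mul, habs1]
    have hjord : |t| ^ 2 / Real.pi ^ 2 ≤ 2 * (1 - Real.cos (|t| / 2)) :=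
      jordan_bound (abs_nonneg t) ht
    have hca : Real.cos (|t| / 2) = Real.cos (t / 2) := by
      rw [show |t| / 2 = |t / 2| by rw [abs_div]; norm_num, Real.cos_abs]
    rw [hca, sq_abs] at hjord
    linarith
  -- conclude
  calc ‖z‖ = ∫ ω, (c * f ω).re ∂μ := hnorm
    _ ≤ ∫ ω, g ω ∂μ := hmono
    _ = 1 - s1 * pA - s2 * pB := hgint
    _ ≤ 1 - (a / Real.pi ^ 2) * t ^ 2 := by
        have h1 : a * s1 ≤ s1 * pA := by nlinarith
        have h2 : a * s2 ≤ s2 * pB := by nlinarith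
        have h3 : (a / Real.pi ^ 2) * t ^ 2 ≤ a * (s1 + s2) := by
          rw [div_mul_eq_mul_div, mul_comm]
          calc t ^ 2 * a / Real.pi ^ 2 = a * (t ^ 2 / Real.pi ^ 2) := by ring
            _ ≤ a * (s1 + s2) := by nlinarith
        nlinarith
end

section
/- For every integer m ≥ 0, P(Po(m) < m) < P(Po(m+1) < m+1) < 1/2, where P(Po(λ) < m) := e^{−λ} ∑_{k=0}^{m−1} λ^k / k! is the probability that a Poisson random variable with mean λ is strictly less than m (an empty sum being 0). -/
open Finset

/-- `poissonLT lam m = P(Po(lam) < m) = e^{-lam} ∑_{k=0}^{m-1} lam^k / k!`. -/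
noncomputable def poissonLT (lam : ℝ) (m : ℕ) : ℝ :=
  Real.exp (-lam) * ∑ k ∈ Finset.range m, lam ^ k / (Nat.factorial k : ℝ)

lemma fact_aux (j : ℕ) : ∀ r : ℕ,
    Nat.factorial (r + (2*j+1)) ≤ (r+j+1)^(2*j+1) * Nat.factorial r := by
  induction j with
  | zero =>
    intro r
    simp [Nat.factorial_succ]
  | succ j ih =>
    intro r
    have h1 := ih (r+1)
    have e1 : r + (2*(j+1)+1) = (r+1 + (2*j+1)) + 1 := by ring
    rw [e1, Nat.factorial_succ]
    have h2 : (r + 1 + (2 * j + 1)) + 1 = r + 2*j + 3 := by ring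
    calc (r + 1 + (2 * j + 1) + 1) * Nat.factorial (r + 1 + (2 * j + 1))
        ≤ (r + 2*j + 3) * ((r + j + 2) ^ (2 * j + 1) * Nat.factorial (r+1)) := by
          rw [h2]; exact Nat.mul_le_mul_left _ (by simpa [Nat.add_assoc, Nat.add_comm, Nat.add_left_comm] using h1)
      _ = ((r + 2*j + 3) * (r + 1)) * ((r + j + 2) ^ (2 * j + 1) * Nat.factorial r) := by
          rw [Nat.factorial_succ]; ring
      _ ≤ ((r + j + 2)^2) * ((r + j + 2) ^ (2 * j + 1) * Nat.factorial r) := by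
          apply Nat.mul_le_mul_right
          nlinarith [sq_nonneg (j : ℤ)]
      _ = (r + (j+1) + 1) ^ (2 * (j+1) + 1) * Nat.factorial r := by
          rw [← mul_assoc, ← pow_add]
          ring_nf

lemma head_term_le (n j : ℕ) (hj : j < n) :
    (n:ℝ)^(n-1-j) / Nat.factorial (n-1-j) ≤ (n:ℝ)^(n+j) / Nat.factorial (n+j) := by
  obtain ⟨r, hr⟩ : ∃ r, n = r + j + 1 := ⟨n - j - 1, by omega⟩
  subst hr
  rw [show r+j+1-1-j = r by omega, show r+j+1+j = r + (2*j+1) by omega]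
  rw [div_le_div_iff₀ (by positivity) (by positivity)]
  have hf := fact_aux j r
  have hfr : ((Nat.factorial (r + (2*j+1)) : ℕ) : ℝ)
      ≤ ((r+j+1:ℕ):ℝ)^(2*j+1) * (Nat.factorial r : ℝ) := by
    exact_mod_cast Nat.cast_le.mpr hf
  calc ((r+j+1:ℕ):ℝ)^r * (Nat.factorial (r + (2*j+1)) : ℝ)
      ≤ ((r+j+1:ℕ):ℝ)^r * (((r+j+1:ℕ):ℝ)^(2*j+1) * (Nat.factorial r : ℝ)) :=
        mul_le_mul_of_nonneg_left hfr (by positivity)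
    _ = ((r+j+1:ℕ):ℝ)^(r+(2*j+1)) * (Nat.factorial r : ℝ) := by rw [pow_add]; ring

lemma half_bound (n : ℕ) (hn : 1 ≤ n) : poissonLT n n < 1/2 := by
  unfold poissonLT
  set head := ∑ k ∈ range n, (n:ℝ)^k / (Nat.factorial k : ℝ) with hh
  have hmid : head ≤ ∑ k ∈ range n, (n:ℝ)^(n+k) / (Nat.factorial (n+k) : ℝ) := by
    rw [hh, ← Finset.sum_range_reflect (fun k => (n:ℝ)^k / (Nat.factorial k : ℝ)) n]
    exact Finset.sum_le_sum fun j hj => head_term_le n j (mem_range.mp hj)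
  have e : ∑ k ∈ range ((n+n)+1), (n:ℝ)^k / (Nat.factorial k : ℝ)
      = head + (∑ k ∈ range n, (n:ℝ)^(n+k) / (Nat.factorial (n+k) : ℝ))
        + (n:ℝ)^(n+n) / (Nat.factorial (n+n) : ℝ) := by
    rw [Finset.sum_range_succ, Finset.sum_range_add, hh]
  have hexp : head + (∑ k ∈ range n, (n:ℝ)^(n+k) / (Nat.factorial (n+k) : ℝ))
      + (n:ℝ)^(n+n) / (Nat.factorial (n+n) : ℝ) ≤ Real.exp n := by
    rw [← e]; exact Real.sum_le_exp_of_nonneg (by positivity) _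
  have hpos : (0:ℝ) < (n:ℝ)^(n+n) / (Nat.factorial (n+n) : ℝ) := by
    have : (0:ℝ) < (n:ℝ) := by exact_mod_cast hn
    positivity
  have h2 : 2 * head < Real.exp n := by nlinarith
  rw [Real.exp_neg, inv_mul_eq_div, div_lt_div_iff₀ (Real.exp_pos _) (by norm_num : (0:ℝ) < 2)]
  linarith

lemma exp_ineq {x : ℝ} (hx : 0 < x) : (1 - x) * Real.exp (2*x) < 1 + x := by
  have hd : ∀ t : ℝ, HasDerivAt (fun s : ℝ => (1+s)*Real.exp (-s) - (1-s)*Real.exp s)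
      (t * (Real.exp t - Real.exp (-t))) t := by
    intro t
    have hexpneg : HasDerivAt (fun s : ℝ => Real.exp (-s)) (-Real.exp (-t)) t := by
      simpa [Function.comp_def] using (Real.hasDerivAt_exp (-t)).comp t (hasDerivAt_neg t)
    have h1 : HasDerivAt (fun s : ℝ => (1+s)*Real.exp (-s))
        (1 * Real.exp (-t) + (1+t) * -Real.exp (-t)) t :=
      ((hasDerivAt_id t).const_add 1).mul hexpneg
    have h2 : HasDerivAt (fun s : ℝ => (1-s)*Real.exp s)
        ((-1) * Real.exp t + (1-t) * Real.exp t) t := by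
      have : HasDerivAt (fun s : ℝ => (1-s)) (-1 : ℝ) t := by
        simpa using (hasDerivAt_id t).const_sub 1
      exact this.mul (Real.hasDerivAt_exp t)
    refine (h1.sub h2).congr_deriv ?_
    ring
  have mono : StrictMonoOn (fun s : ℝ => (1+s)*Real.exp (-s) - (1-s)*Real.exp s) (Set.Ici 0) := by
    apply strictMonoOn_of_deriv_pos (convex_Ici 0)
    · exact Continuous.continuousOn (by continuity)
    · intro t ht
      rw [interior_Ici, Set.mem_Ioi] at ht
      rw [(hd t).deriv]
      have hlt : Real.exp (-t) < Real.exp t := Real.exp_lt_exp.mpr (by linarith)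
      nlinarith
  have h0 := mono Set.self_mem_Ici (Set.mem_Ici.mpr hx.le) hx
  simp only [neg_zero, Real.exp_zero, add_zero, sub_zero, mul_one] at h0
  have h1 : (1-x) * Real.exp x < (1+x) * Real.exp (-x) := by
    norm_num at h0; linarith
  have h2 := mul_lt_mul_of_pos_right h1 (Real.exp_pos x)
  calc (1-x) * Real.exp (2*x) = (1-x) * Real.exp x * Real.exp x := by
        rw [mul_assoc, ← Real.exp_add]; ring_nf
    _ < (1+x) * Real.exp (-x) * Real.exp x := h2
    _ = 1 + x := by rw [mul_assoc, ← Real.exp_add]; simp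

lemma sum_hasDeriv (N : ℕ) (x : ℝ) :
    HasDerivAt (fun y : ℝ => ∑ k ∈ range (N+1), y^k / (Nat.factorial k : ℝ))
      (∑ k ∈ range N, x^k / (Nat.factorial k : ℝ)) x := by
  have h : HasDerivAt (fun y : ℝ => ∑ k ∈ range (N+1), y^k / (Nat.factorial k : ℝ))
      (∑ k ∈ range (N+1), ((k:ℝ) * x^(k-1)) / (Nat.factorial k : ℝ)) x := by
    apply HasDerivAt.fun_sum
    intro k _
    exact (hasDerivAt_pow k x).div_const _
  convert h using 1
  rw [Finset.sum_range_succ']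
  have he : ∀ i ∈ range N,
      (((i+1:ℕ):ℝ) * x^(i+1-1)) / (Nat.factorial (i+1) : ℝ) = x^i / (Nat.factorial i : ℝ) := by
    intro i _
    rw [Nat.factorial_succ, show i+1-1 = i from rfl]
    have : (Nat.factorial i : ℝ) ≠ 0 := by positivity
    push_cast
    field_simp
  rw [Finset.sum_congr rfl he]
  simp

lemma G_hasDeriv (p : ℕ) (x : ℝ) :
    HasDerivAt (fun y : ℝ => Real.exp (-y) * ∑ k ∈ range (p+1), y^k / (Nat.factorial k : ℝ))
      (-(Real.exp (-x) * x^p / (Nat.factorial p : ℝ))) x := by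
  have hexp : HasDerivAt (fun y : ℝ => Real.exp (-y)) (-Real.exp (-x)) x := by
    simpa [Function.comp_def] using (Real.hasDerivAt_exp (-x)).comp x (hasDerivAt_neg x)
  have h := hexp.mul (sum_hasDeriv p x)
  refine h.congr_deriv ?_
  rw [Finset.sum_range_succ]
  ring

lemma mono_main (p : ℕ) :
    poissonLT ((p:ℝ)+1) (p+1) < poissonLT ((p:ℝ)+2) (p+2) := by
  have ha : (0:ℝ) < (p:ℝ)+1 := by positivity
  have hb : (0:ℝ) < (p:ℝ)+2 := by positivity
  have hab : (p:ℝ)+1 ≤ (p:ℝ)+2 := by linarith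
  have hfact : (0:ℝ) < (Nat.factorial p : ℝ) := by positivity
  set a : ℝ := (p:ℝ)+1 with hadef
  set b : ℝ := (p:ℝ)+2 with hbdef
  set G : ℝ → ℝ := fun y => Real.exp (-y) * ∑ k ∈ range (p+1), y^k / (Nat.factorial k : ℝ)
    with hGdef
  -- FTC for G
  have hcont : Continuous (fun y : ℝ => -(Real.exp (-y) * y^p / (Nat.factorial p : ℝ))) := by
    fun_prop
  have hftc : ∫ y in a..b, -(Real.exp (-y) * y^p / (Nat.factorial p : ℝ)) = G b - G a :=
    intervalIntegral.integral_eq_sub_of_hasDerivAt (fun x _ => G_hasDeriv p x)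
      (hcont.intervalIntegrable a b)
  have hI : ∫ y in a..b, Real.exp (-y) * y^p / (Nat.factorial p : ℝ) = G a - G b := by
    rw [intervalIntegral.integral_neg] at hftc
    linarith
  -- the comparison function
  set C : ℝ := b^p * Real.exp (-b) / (Nat.factorial p : ℝ) with hCdef
  have hC : 0 < C := by positivity
  set φ : ℝ → ℝ := fun y => C * Real.exp ((2/b)*(b-y)) with hφdef
  -- pointwise bound
  have hkey : ∀ y ∈ Set.Icc a b, Real.exp (-y) * y^p / (Nat.factorial p : ℝ) ≤ φ y := by
    intro y hy
    have hy0 : 0 < y := lt_of_lt_of_le ha hy.1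
    have h1 : y / b ≤ Real.exp (-((b-y)/b)) := by
      have := Real.add_one_le_exp (-((b-y)/b))
      have hvb : y / b = 1 - (b-y)/b := by field_simp; ring
      linarith
    have h2 : (y/b)^p ≤ Real.exp (-((b-y)/b))^p := pow_le_pow_left₀ (by positivity) h1 p
    have h3 : y^p ≤ b^p * Real.exp (-((b-y)/b)*p) := by
      have e1 : y^p = b^p * (y/b)^p := by
        rw [div_pow]; field_simp
      have e2 : Real.exp (-((b-y)/b))^p = Real.exp (-((b-y)/b)*(p:ℕ)) := by
        rw [← Real.exp_nat_mul]; ring_nf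
      rw [e1, ← e2]
      exact mul_le_mul_of_nonneg_left h2 (by positivity)
    have h4 : Real.exp (-y) * y^p / (Nat.factorial p : ℝ)
        ≤ Real.exp (-y) * (b^p * Real.exp (-((b-y)/b)*p)) / (Nat.factorial p : ℝ) := by
      gcongr
    refine h4.trans_eq ?_
    have hexps : Real.exp (-y) * Real.exp (-((b-y)/b)*p)
        = Real.exp (-b) * Real.exp ((2/b)*(b-y)) := by
      rw [← Real.exp_add, ← Real.exp_add]
      congr 1
      rw [hbdef]
      field_simp
      ring
    calc Real.exp (-y) * (b^p * Real.exp (-((b-y)/b)*p)) / (Nat.factorial p : ℝ)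
        = b^p * (Real.exp (-y) * Real.exp (-((b-y)/b)*p)) / (Nat.factorial p : ℝ) := by ring
      _ = b^p * (Real.exp (-b) * Real.exp ((2/b)*(b-y))) / (Nat.factorial p : ℝ) := by
          rw [hexps]
      _ = φ y := by rw [hφdef, hCdef]; ring
  -- integral of the comparison function
  set ψ : ℝ → ℝ := fun y => -(b/2) * C * Real.exp ((2/b)*(b-y)) with hψdef
  have hψ : ∀ y : ℝ, HasDerivAt ψ (φ y) y := by
    intro y
    have hinner : HasDerivAt (fun y : ℝ => (2/b)*(b-y)) ((2/b) * (-1)) y :=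
      ((hasDerivAt_id y).const_sub b).const_mul (2/b)
    have hexp := (Real.hasDerivAt_exp ((2/b)*(b-y))).comp y hinner
    have h := hexp.const_mul (-(b/2) * C)
    refine h.congr_deriv ?_
    rw [hφdef]
    field_simp
  have hφcont : Continuous φ := by
    rw [hφdef]; fun_prop
  have hφint : ∫ y in a..b, φ y = (b/2) * C * (Real.exp (2/b) - 1) := by
    rw [intervalIntegral.integral_eq_sub_of_hasDerivAt (fun y _ => hψ y)
      (hφcont.intervalIntegrable a b)]
    rw [hψdef]
    have e1 : b - a = 1 := by rw [hadef, hbdef]; ring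
    simp only [sub_self, mul_zero, Real.exp_zero, e1, mul_one]
    ring
  have hcont2 : Continuous (fun y : ℝ => Real.exp (-y) * y^p / (Nat.factorial p : ℝ)) := by
    fun_prop
  have hmono : (∫ y in a..b, Real.exp (-y) * y^p / (Nat.factorial p : ℝ)) ≤ ∫ y in a..b, φ y :=
    intervalIntegral.integral_mono_on hab (hcont2.intervalIntegrable a b)
      (hφcont.intervalIntegrable a b) hkey
  -- the exponential inequality
  have hx := exp_ineq (x := 1/b) (by positivity)
  have h2b : 2*(1/b) = 2/b := by ring
  rw [h2b] at hx
  have hba : b = a + 1 := by rw [hadef, hbdef]; ring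
  have h5 : a * (Real.exp (2/b) - 1) < 2 := by
    have hb1 : (1 - 1/b) = a/b := by rw [hba]; field_simp; ring
    have hb2 : (1 + 1/b) = (a+2)/b := by rw [hba]; field_simp; ring
    rw [hb1, hb2] at hx
    have hmul := mul_lt_mul_of_pos_right hx hb
    have e : a/b * Real.exp (2/b) * b = a * Real.exp (2/b) := by field_simp
    have e2 : (a+2)/b * b = a + 2 := by field_simp
    rw [e, e2] at hmul
    nlinarith
  -- final assembly
  have h6 : (b/2) * C * (Real.exp (2/b) - 1)
      < Real.exp (-b) * (b^(p+1) / (Nat.factorial (p+1) : ℝ)) := by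
    have h7 : (b/2) * C * (Real.exp (2/b) - 1) = (b*C/(2*a)) * (a * (Real.exp (2/b) - 1)) := by
      field_simp
    have h8 : Real.exp (-b) * (b^(p+1) / (Nat.factorial (p+1) : ℝ)) = (b*C/(2*a)) * 2 := by
      rw [hCdef, hadef]
      push_cast [Nat.factorial_succ]
      field_simp
      ring
    rw [h7, h8]
    exact mul_lt_mul_of_pos_left h5 (by positivity)
  have hGa : G a = poissonLT a (p+1) := rfl
  have hGb : poissonLT b (p+2) = G b + Real.exp (-b) * (b^(p+1) / (Nat.factorial (p+1) : ℝ)) := by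
    show Real.exp (-b) * ∑ k ∈ range (p+2), b^k / (Nat.factorial k : ℝ)
        = Real.exp (-b) * ∑ k ∈ range (p+1), b^k / (Nat.factorial k : ℝ)
          + Real.exp (-b) * (b^(p+1) / (Nat.factorial (p+1) : ℝ))
    rw [Finset.sum_range_succ]
    ring
  rw [← hGa, hGb]
  linarith

theorem stmt9 (m : ℕ) :
    poissonLT m m < poissonLT (m + 1) (m + 1) ∧ poissonLT (m + 1) (m + 1) < 1 / 2 := by
  constructor
  · rcases Nat.eq_zero_or_pos m with hm | hm
    · subst hm
      simp only [poissonLT, Nat.cast_zero, Finset.range_zero, Finset.sum_empty, mul_zero,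
        zero_add]
      have h1 : (0:ℝ) < Real.exp (-1) * ∑ k ∈ Finset.range 1, (1:ℝ)^k / (Nat.factorial k : ℝ) := by
        simp
        positivity
      simpa using h1
    · obtain ⟨p, rfl⟩ : ∃ p, m = p + 1 := ⟨m - 1, by omega⟩
      have h := mono_main p
      push_cast
      have e2 : (p:ℝ)+1+1 = (p:ℝ)+2 := by ring
      rw [e2]
      exact h
  · have h := half_bound (m+1) (by omega)
    have e1 : ((m+1:ℕ):ℝ) = (m:ℝ)+1 := by push_cast; ring
    rw [e1] at h
    exact h
end

section
/- For every integer m ≥ 0, P(Po(m) ≤ m) > P(Po(m+1) ≤ m+1) > 1/2, where P(Po(λ) ≤ m) := e^{−λ} ∑_{k=0}^{m} λ^k / k! is the probability that a Poisson random variable with mean λ is at most m. -/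
open Finset

/-- `poissonLE lam m = P(Po(lam) ≤ m) = e^{-lam} ∑_{k=0}^{m} lam^k / k!`. -/
noncomputable def poissonLE (lam : ℝ) (m : ℕ) : ℝ :=
  Real.exp (-lam) * ∑ k ∈ Finset.range (m + 1), lam ^ k / (Nat.factorial k : ℝ)

open MeasureTheory Set

private noncomputable def antider (n : ℕ) (t : ℝ) : ℝ :=
  -(Real.exp (-t) * ∑ k ∈ Finset.range (n + 1), ((Nat.factorial n : ℝ) / (Nat.factorial k : ℝ)) * t ^ k)

private lemma antider_hasDerivAt (n : ℕ) (t : ℝ) :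
    HasDerivAt (antider n) (t ^ n * Real.exp (-t)) t := by
  have hexp : HasDerivAt (fun t : ℝ => Real.exp (-t)) (-Real.exp (-t)) t := by
    simpa using ((hasDerivAt_id t).neg).exp
  have hsum : HasDerivAt (fun t : ℝ => ∑ k ∈ Finset.range (n + 1),
      ((Nat.factorial n : ℝ) / (Nat.factorial k : ℝ)) * t ^ k)
      (∑ k ∈ Finset.range n, ((Nat.factorial n : ℝ) / (Nat.factorial k : ℝ)) * t ^ k) t := by
    have : HasDerivAt (fun t : ℝ => ∑ k ∈ Finset.range (n + 1),
        ((Nat.factorial n : ℝ) / (Nat.factorial k : ℝ)) * t ^ k)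
        (∑ k ∈ Finset.range (n + 1),
          ((Nat.factorial n : ℝ) / (Nat.factorial k : ℝ)) * (k * t ^ (k - 1))) t :=
      HasDerivAt.fun_sum fun k _ => (hasDerivAt_pow k t).const_mul _
    convert this using 1
    rw [Finset.sum_range_succ' (fun k => ((Nat.factorial n : ℝ) / (Nat.factorial k : ℝ)) * (k * t ^ (k - 1)))]
    simp only [Nat.cast_zero, zero_mul, mul_zero, add_zero]
    apply Finset.sum_congr rfl
    intro k _
    have : ((Nat.factorial n : ℝ) / (Nat.factorial (k+1) : ℝ)) * ((k+1 : ℕ) : ℝ) =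
        (Nat.factorial n : ℝ) / (Nat.factorial k : ℝ) := by
      rw [Nat.factorial_succ]
      push_cast
      field_simp
    rw [Nat.add_sub_cancel, ← this]
    push_cast
    ring
  have := (hexp.mul hsum).neg
  refine this.congr_deriv ?_
  rw [Finset.sum_range_succ]
  have h1 : (Nat.factorial n : ℝ) / (Nat.factorial n : ℝ) = 1 := by
    rw [div_self]; exact_mod_cast (Nat.factorial_pos n).ne'
  rw [h1, one_mul]
  ring

private lemma antider_tendsto (n : ℕ) :
    Filter.Tendsto (antider n) Filter.atTop (nhds 0) := by
  have : Filter.Tendsto (fun t : ℝ => ∑ k ∈ Finset.range (n + 1),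
      ((Nat.factorial n : ℝ) / (Nat.factorial k : ℝ)) * (t ^ k * Real.exp (-t)))
      Filter.atTop (nhds 0) := by
    have := tendsto_finset_sum (Finset.range (n+1)) (fun (k : ℕ) (_ : k ∈ Finset.range (n+1)) =>
        ((Real.tendsto_pow_mul_exp_neg_atTop_nhds_zero k).const_mul
          ((Nat.factorial n : ℝ) / (Nat.factorial k : ℝ))))
    simpa using this
  have h := this.neg
  simp only [neg_zero] at h
  apply h.congr
  intro t
  simp only [antider, Finset.mul_sum, neg_inj]
  apply Finset.sum_congr rfl
  intro k _
  ring

private lemma integral_Ioi_key (lam : ℝ) (hlam : 0 ≤ lam) (n : ℕ) :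
    ∫ t in Set.Ioi lam, t ^ n * Real.exp (-t) = (Nat.factorial n : ℝ) * poissonLE lam n := by
  have h := integral_Ioi_of_hasDerivAt_of_nonneg (g := antider n)
    (g' := fun t => t ^ n * Real.exp (-t)) (a := lam) (l := 0)
    (antider_hasDerivAt n lam).continuousAt.continuousWithinAt
    (fun x _ => antider_hasDerivAt n x)
    (fun x hx => mul_nonneg (pow_nonneg (le_trans hlam (le_of_lt hx)) n) (Real.exp_pos _).le)
    (antider_tendsto n)
  rw [h]
  simp only [antider, poissonLE, zero_sub, neg_neg, Finset.mul_sum]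
  exact Finset.sum_congr rfl fun k _ => by ring

private lemma integrableOn_Ioi_key (lam : ℝ) (hlam : 0 ≤ lam) (n : ℕ) :
    IntegrableOn (fun t => t ^ n * Real.exp (-t)) (Set.Ioi lam) := by
  exact integrableOn_Ioi_deriv_of_nonneg' (g := antider n)
    (fun x _ => antider_hasDerivAt n x)
    (fun x hx => mul_nonneg (pow_nonneg (le_trans hlam (le_of_lt hx)) n) (Real.exp_pos _).le)
    (antider_tendsto n)

private lemma g_cont (n : ℕ) : Continuous (fun t : ℝ => t ^ n * Real.exp (-t)) := by
  continuity

private lemma split_int (n : ℕ) {a b : ℝ} (hab : a ≤ b) (hb : 0 ≤ b) :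
    ∫ t in Set.Ioi a, t ^ n * Real.exp (-t) =
      (∫ t in a..b, t ^ n * Real.exp (-t)) + ∫ t in Set.Ioi b, t ^ n * Real.exp (-t) := by
  rw [intervalIntegral.integral_of_le hab,
    ← MeasureTheory.setIntegral_union (Set.Ioc_disjoint_Ioi le_rfl) measurableSet_Ioi
      ((g_cont n).integrableOn_Ioc) (integrableOn_Ioi_key b hb n),
    Set.Ioc_union_Ioi_eq_Ioi hab]

private lemma g_antitone (n : ℕ) {t1 t2 : ℝ} (h1 : (n : ℝ) ≤ t1) (h12 : t1 ≤ t2) :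
    t2 ^ n * Real.exp (-t2) ≤ t1 ^ n * Real.exp (-t1) := by
  rcases Nat.eq_zero_or_pos n with hn | hn
  · subst hn; simpa using Real.exp_le_exp.2 (neg_le_neg h12)
  · have ht1 : 0 < t1 := lt_of_lt_of_le (by exact_mod_cast hn) h1
    have hd : 0 ≤ (t2 - t1) / t1 := div_nonneg (by linarith) ht1.le
    have h2 : t2 ≤ t1 * Real.exp ((t2 - t1) / t1) := by
      have := Real.add_one_le_exp ((t2 - t1) / t1)
      calc t2 = t1 * ((t2 - t1) / t1 + 1) := by field_simp; ring
        _ ≤ t1 * Real.exp ((t2 - t1) / t1) := by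
            exact mul_le_mul_of_nonneg_left this ht1.le
    have h3 : t2 ^ n ≤ t1 ^ n * Real.exp ((n : ℝ) * ((t2 - t1) / t1)) := by
      calc t2 ^ n ≤ (t1 * Real.exp ((t2 - t1) / t1)) ^ n :=
            pow_le_pow_left₀ (by linarith) h2 n
        _ = t1 ^ n * Real.exp ((n : ℝ) * ((t2 - t1) / t1)) := by
            rw [mul_pow, Real.exp_nat_mul]
    have h4 : (n : ℝ) * ((t2 - t1) / t1) ≤ t2 - t1 := by
      have := mul_le_mul_of_nonneg_left h1 hd
      calc (n : ℝ) * ((t2 - t1) / t1) = (t2 - t1) / t1 * n := by ring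
        _ ≤ (t2 - t1) / t1 * t1 := this
        _ = t2 - t1 := by field_simp
    calc t2 ^ n * Real.exp (-t2) ≤ t1 ^ n * Real.exp ((n : ℝ) * ((t2 - t1) / t1)) * Real.exp (-t2) :=
          mul_le_mul_of_nonneg_right h3 (Real.exp_pos _).le
      _ ≤ t1 ^ n * Real.exp (t2 - t1) * Real.exp (-t2) := by
          have := Real.exp_le_exp.2 h4
          exact mul_le_mul_of_nonneg_right
            (mul_le_mul_of_nonneg_left this (pow_nonneg ht1.le n)) (Real.exp_pos _).le
      _ = t1 ^ n * Real.exp (-t1) := by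
          rw [mul_assoc, ← Real.exp_add]; ring_nf

private lemma scalar_ineq {x : ℝ} (hx : x ∈ Set.Icc (0:ℝ) 1) :
    (1 - x) * Real.exp (2 * x) ≤ 1 + x := by
  set f : ℝ → ℝ := fun x => (1 + x) - (1 - x) * Real.exp (2 * x) with hf
  have hderiv : ∀ y : ℝ, HasDerivAt f (1 - (1 - 2 * y) * Real.exp (2 * y)) y := by
    intro y
    have he : HasDerivAt (fun y : ℝ => Real.exp (2 * y)) (2 * Real.exp (2 * y)) y := by
      simpa [mul_comm] using ((hasDerivAt_id y).const_mul 2).exp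
    have h1 : HasDerivAt (fun y : ℝ => (1 - y) * Real.exp (2 * y))
        ((-1) * Real.exp (2 * y) + (1 - y) * (2 * Real.exp (2 * y))) y :=
      ((hasDerivAt_id y).const_sub 1).mul he
    have h2 : HasDerivAt (fun y : ℝ => (1 + y : ℝ)) 1 y := by
      simpa using (hasDerivAt_id y).const_add 1
    refine (h2.sub h1).congr_deriv ?_
    ring
  have hmono : MonotoneOn f (Set.Icc (0:ℝ) 1) := by
    apply monotoneOn_of_deriv_nonneg (convex_Icc 0 1)
    · exact (Continuous.continuousOn (by continuity))
    · intro y hy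
      exact (hderiv y).differentiableAt.differentiableWithinAt
    · intro y hy
      rw [(hderiv y).deriv]
      have : (1 - 2 * y) * Real.exp (2 * y) ≤ 1 := by
        have h5 : 1 - 2 * y ≤ Real.exp (-(2 * y)) := by
          have := Real.add_one_le_exp (-(2 * y)); linarith
        calc (1 - 2 * y) * Real.exp (2 * y) ≤ Real.exp (-(2 * y)) * Real.exp (2 * y) :=
              mul_le_mul_of_nonneg_right h5 (Real.exp_pos _).le
          _ = 1 := by rw [← Real.exp_add]; simp
      linarith
  have h0 : f 0 = 0 := by simp [hf]
  have := hmono (Set.mem_Icc.2 ⟨le_refl 0, zero_le_one⟩) hx hx.1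
  rw [h0] at this
  simp only [hf] at this
  linarith

private lemma reflect_ineq (N : ℕ) (hN : 1 ≤ N) {t : ℝ} (ht : t ∈ Set.Icc (0:ℝ) (N:ℝ)) :
    t ^ N * Real.exp (-t) ≤ (2 * N - t) ^ N * Real.exp (-(2 * N - t)) := by
  have hN0 : (0:ℝ) < N := by exact_mod_cast hN
  set x : ℝ := ((N:ℝ) - t) / N with hxdef
  have hx : x ∈ Set.Icc (0:ℝ) 1 := by
    constructor
    · exact div_nonneg (by linarith [ht.2]) hN0.le
    · rw [div_le_one hN0]; linarith [ht.1]
  have key := scalar_ineq hx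
  have hx1 : (1 - x) * N = t := by rw [hxdef]; field_simp; ring
  have hx2 : (1 + x) * N = 2 * N - t := by rw [hxdef]; field_simp; ring
  have h2 : t * Real.exp (2 * x) ≤ 2 * N - t := by
    have := mul_le_mul_of_nonneg_right key hN0.le
    calc t * Real.exp (2 * x) = (1 - x) * Real.exp (2 * x) * N := by
          rw [mul_comm ((1:ℝ) - x) (Real.exp (2*x)), mul_assoc, hx1]; ring
      _ ≤ (1 + x) * N := this
      _ = 2 * N - t := hx2
  have h3 : (t * Real.exp (2 * x)) ^ N ≤ (2 * N - t) ^ N :=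
    pow_le_pow_left₀ (mul_nonneg ht.1 (Real.exp_pos _).le) h2 N
  have hNx : (N : ℝ) * (2 * x) = 2 * ((N:ℝ) - t) := by
    rw [hxdef]; field_simp
  have h4 : (t * Real.exp (2 * x)) ^ N = t ^ N * Real.exp (2 * ((N:ℝ) - t)) := by
    rw [mul_pow, ← Real.exp_nat_mul, hNx]
  calc t ^ N * Real.exp (-t)
      = t ^ N * Real.exp (2 * ((N:ℝ) - t)) * Real.exp (-(2 * N - t)) := by
        rw [mul_assoc, ← Real.exp_add]; ring_nf
    _ ≤ (2 * N - t) ^ N * Real.exp (-(2 * N - t)) := by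
        rw [← h4]
        exact mul_le_mul_of_nonneg_right h3 (Real.exp_pos _).le

private lemma interval_lower (n : ℕ) {a b : ℝ} (hna : (n:ℝ) ≤ a) (hab : a ≤ b) :
    (b - a) * (b ^ n * Real.exp (-b)) ≤ ∫ t in a..b, t ^ n * Real.exp (-t) := by
  have h := intervalIntegral.integral_mono_on (f := fun _ : ℝ => b ^ n * Real.exp (-b))
    (g := fun t : ℝ => t ^ n * Real.exp (-t)) (μ := MeasureTheory.volume) hab
    (intervalIntegrable_const) ((g_cont n).intervalIntegrable _ _)
    (fun x hx => g_antitone n (le_trans hna hx.1) hx.2)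
  calc (b - a) * (b ^ n * Real.exp (-b)) = b ^ n * ((b - a) * Real.exp (-b)) := by ring
    _ ≤ _ := by simpa using h

private lemma mid_lt (m : ℕ) :
    ((m:ℝ) + 1) ^ m * Real.exp (-((m:ℝ)+1)) < ((m:ℝ) + 1/2) ^ m * Real.exp (-((m:ℝ)+1/2)) := by
  have hpos : (0:ℝ) < 2*(m:ℝ)+1 := by positivity
  have e1 : ((m:ℝ)+1) ≤ ((m:ℝ)+1/2) * Real.exp (1/(2*(m:ℝ)+1)) := by
    have h := Real.add_one_le_exp (1/(2*(m:ℝ)+1))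
    have hid : ((m:ℝ)+1/2) * (1/(2*(m:ℝ)+1) + 1) = (m:ℝ)+1 := by field_simp; ring
    calc ((m:ℝ)+1) = ((m:ℝ)+1/2) * (1/(2*(m:ℝ)+1) + 1) := hid.symm
      _ ≤ ((m:ℝ)+1/2) * Real.exp (1/(2*(m:ℝ)+1)) :=
          mul_le_mul_of_nonneg_left h (by positivity)
  have e2 : ((m:ℝ)+1)^m ≤ ((m:ℝ)+1/2)^m * Real.exp ((m:ℝ)*(1/(2*(m:ℝ)+1))) := by
    calc ((m:ℝ)+1)^m ≤ (((m:ℝ)+1/2) * Real.exp (1/(2*(m:ℝ)+1)))^m :=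
          pow_le_pow_left₀ (by positivity) e1 m
      _ = ((m:ℝ)+1/2)^m * Real.exp ((m:ℝ)*(1/(2*(m:ℝ)+1))) := by
          rw [mul_pow, ← Real.exp_nat_mul]
  have e3 : Real.exp ((m:ℝ)*(1/(2*(m:ℝ)+1))) < Real.exp (1/2) := by
    apply Real.exp_lt_exp.2
    rw [mul_one_div, div_lt_div_iff₀ hpos (by norm_num : (0:ℝ) < 2)]
    linarith
  have e4 : ((m:ℝ)+1)^m < ((m:ℝ)+1/2)^m * Real.exp (1/2) :=
    lt_of_le_of_lt e2 (mul_lt_mul_of_pos_left e3 (by positivity))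
  calc ((m:ℝ)+1)^m * Real.exp (-((m:ℝ)+1))
      < (((m:ℝ)+1/2)^m * Real.exp (1/2)) * Real.exp (-((m:ℝ)+1)) :=
        mul_lt_mul_of_pos_right e4 (Real.exp_pos _)
    _ = ((m:ℝ)+1/2)^m * Real.exp (-((m:ℝ)+1/2)) := by
        rw [mul_assoc, ← Real.exp_add,
          show (1:ℝ)/2 + -((m:ℝ)+1) = -((m:ℝ)+1/2) by ring]

private lemma interval_gt (m : ℕ) :
    ((m:ℝ) + 1) ^ m * Real.exp (-((m:ℝ)+1)) < ∫ t in (m:ℝ)..((m:ℝ)+1), t ^ m * Real.exp (-t) := by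
  have hint1 : IntervalIntegrable (fun t : ℝ => t ^ m * Real.exp (-t)) MeasureTheory.volume
      (m:ℝ) ((m:ℝ)+1/2) := (g_cont m).intervalIntegrable _ _
  have hint2 : IntervalIntegrable (fun t : ℝ => t ^ m * Real.exp (-t)) MeasureTheory.volume
      ((m:ℝ)+1/2) ((m:ℝ)+1) := (g_cont m).intervalIntegrable _ _
  have hadd := intervalIntegral.integral_add_adjacent_intervals hint1 hint2
  have hb1 := interval_lower m (le_refl (m:ℝ)) (by linarith : (m:ℝ) ≤ (m:ℝ)+1/2)
  have hb2 := interval_lower m (by linarith : (m:ℝ) ≤ (m:ℝ)+1/2)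
    (by linarith : (m:ℝ)+1/2 ≤ (m:ℝ)+1)
  have hq := mid_lt m
  have h1 : ((m:ℝ)+1/2) - (m:ℝ) = 1/2 := by ring
  have h2 : ((m:ℝ)+1) - ((m:ℝ)+1/2) = 1/2 := by ring
  rw [h1] at hb1
  rw [h2] at hb2
  linarith

theorem stmt10 (m : ℕ) :
    poissonLE m m > poissonLE (m + 1) (m + 1) ∧ poissonLE (m + 1) (m + 1) > 1 / 2 := by
  constructor
  · -- monotonicity part
    have hfac : (0:ℝ) < (Nat.factorial m : ℝ) := by exact_mod_cast Nat.factorial_pos m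
    have hm0 : (0:ℝ) ≤ (m:ℝ) := Nat.cast_nonneg m
    have key1 : ∫ t in Set.Ioi (m:ℝ), t ^ m * Real.exp (-t)
        = (Nat.factorial m : ℝ) * poissonLE (m:ℝ) m := integral_Ioi_key (m:ℝ) hm0 m
    have key2 : ∫ t in Set.Ioi ((m:ℝ)+1), t ^ m * Real.exp (-t)
        = (Nat.factorial m : ℝ) * poissonLE ((m:ℝ)+1) m :=
      integral_Ioi_key ((m:ℝ)+1) (by positivity) m
    have hsplit : ∫ t in Set.Ioi (m:ℝ), t ^ m * Real.exp (-t)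
        = (∫ t in (m:ℝ)..((m:ℝ)+1), t ^ m * Real.exp (-t))
          + ∫ t in Set.Ioi ((m:ℝ)+1), t ^ m * Real.exp (-t) :=
      split_int m (by linarith) (by positivity)
    have hsucc : poissonLE ((m:ℝ)+1) (m+1)
        = poissonLE ((m:ℝ)+1) m
          + Real.exp (-((m:ℝ)+1)) * (((m:ℝ)+1)^(m+1) / (Nat.factorial (m+1) : ℝ)) := by
      simp only [poissonLE, Finset.sum_range_succ, mul_add]
    have hfacmul : (Nat.factorial m : ℝ) * (((m:ℝ)+1)^(m+1) / (Nat.factorial (m+1) : ℝ))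
        = ((m:ℝ)+1)^m := by
      rw [Nat.factorial_succ, pow_succ]
      push_cast
      have h1 : ((m:ℝ)+1) ≠ 0 := by positivity
      have h2 : (Nat.factorial m : ℝ) ≠ 0 := by positivity
      field_simp
    have hIbound := interval_gt m
    have final : (Nat.factorial m : ℝ) * poissonLE ((m:ℝ)+1) (m+1)
        < (Nat.factorial m : ℝ) * poissonLE (m:ℝ) m := by
      have expand : (Nat.factorial m : ℝ) * poissonLE ((m:ℝ)+1) (m+1)
          = (Nat.factorial m : ℝ) * poissonLE ((m:ℝ)+1) m
            + ((m:ℝ)+1)^m * Real.exp (-((m:ℝ)+1)) := by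
        rw [hsucc, mul_add]
        congr 1
        rw [mul_comm (Real.exp _) _, ← mul_assoc, hfacmul]
      rw [expand, ← key2, ← key1, hsplit]
      linarith
    exact (mul_lt_mul_iff_right₀ hfac).mp final
  · -- greater than 1/2
    have hcast : ((m:ℝ) + 1) = ((m+1 : ℕ) : ℝ) := by push_cast; ring
    rw [hcast]
    set N := m + 1 with hN
    have hN1 : 1 ≤ N := Nat.le_add_left 1 m
    have hNpos : (0:ℝ) < (N:ℝ) := by exact_mod_cast Nat.succ_pos m
    have hfacN : (0:ℝ) < (Nat.factorial N : ℝ) := by exact_mod_cast Nat.factorial_pos N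
    have keyN : ∫ t in Set.Ioi (N:ℝ), t ^ N * Real.exp (-t)
        = (Nat.factorial N : ℝ) * poissonLE (N:ℝ) N := integral_Ioi_key (N:ℝ) hNpos.le N
    have key0 : ∫ t in Set.Ioi (0:ℝ), t ^ N * Real.exp (-t)
        = (Nat.factorial N : ℝ) * poissonLE 0 N := integral_Ioi_key 0 le_rfl N
    have hpLE0 : poissonLE 0 N = 1 := by
      simp only [poissonLE, neg_zero, Real.exp_zero, one_mul]
      rw [Finset.sum_eq_single 0]
      · norm_num
      · intro k _ hk
        rw [zero_pow hk, zero_div]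
      · intro h
        exact absurd (Finset.mem_range.2 (Nat.succ_pos N)) h
    have split0 : ∫ t in Set.Ioi (0:ℝ), t ^ N * Real.exp (-t)
        = (∫ t in (0:ℝ)..(N:ℝ), t ^ N * Real.exp (-t))
          + ∫ t in Set.Ioi (N:ℝ), t ^ N * Real.exp (-t) :=
      split_int N hNpos.le hNpos.le
    have splitN : ∫ t in Set.Ioi (N:ℝ), t ^ N * Real.exp (-t)
        = (∫ t in (N:ℝ)..(2*(N:ℝ)), t ^ N * Real.exp (-t))
          + ∫ t in Set.Ioi (2*(N:ℝ)), t ^ N * Real.exp (-t) :=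
      split_int N (by linarith) (by linarith)
    have hrefl : (∫ t in (0:ℝ)..(N:ℝ), (2*(N:ℝ) - t) ^ N * Real.exp (-(2*(N:ℝ) - t)))
        = ∫ t in (N:ℝ)..(2*(N:ℝ)), t ^ N * Real.exp (-t) := by
      have := intervalIntegral.integral_comp_sub_left
        (fun t : ℝ => t ^ N * Real.exp (-t)) (a := 0) (b := (N:ℝ)) (2*(N:ℝ))
      rw [this, show 2*(N:ℝ) - (N:ℝ) = (N:ℝ) by ring, show 2*(N:ℝ) - 0 = 2*(N:ℝ) by ring]
    have hmono : (∫ t in (0:ℝ)..(N:ℝ), t ^ N * Real.exp (-t))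
        ≤ ∫ t in (0:ℝ)..(N:ℝ), (2*(N:ℝ) - t) ^ N * Real.exp (-(2*(N:ℝ) - t)) := by
      apply intervalIntegral.integral_mono_on hNpos.le
        ((g_cont N).intervalIntegrable _ _)
        (((g_cont N).comp (by fun_prop : Continuous (fun t : ℝ => 2*(N:ℝ) - t))).intervalIntegrable _ _)
      intro x hx
      exact reflect_ineq N hN1 hx
    have htail : 0 < ∫ t in Set.Ioi (2*(N:ℝ)), t ^ N * Real.exp (-t) := by
      have hs : ∫ t in Set.Ioi (2*(N:ℝ)), t ^ N * Real.exp (-t)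
          = (∫ t in (2*(N:ℝ))..(2*(N:ℝ)+1), t ^ N * Real.exp (-t))
            + ∫ t in Set.Ioi (2*(N:ℝ)+1), t ^ N * Real.exp (-t) :=
        split_int N (by linarith) (by linarith)
      have hb := interval_lower N (by linarith : (N:ℝ) ≤ 2*(N:ℝ))
        (by linarith : 2*(N:ℝ) ≤ 2*(N:ℝ)+1)
      have hgpos : (0:ℝ) < (2*(N:ℝ)+1) ^ N * Real.exp (-(2*(N:ℝ)+1)) := by positivity
      have hs1 : (2*(N:ℝ)+1) - 2*(N:ℝ) = 1 := by ring
      rw [hs1, one_mul] at hb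
      have hnn : 0 ≤ ∫ t in Set.Ioi (2*(N:ℝ)+1), t ^ N * Real.exp (-t) := by
        apply MeasureTheory.setIntegral_nonneg measurableSet_Ioi
        intro x hx
        have : (0:ℝ) ≤ x := le_of_lt (lt_of_le_of_lt (by positivity) hx)
        positivity
      rw [hs]
      linarith
    have lt2 : (Nat.factorial N : ℝ) < 2 * ((Nat.factorial N : ℝ) * poissonLE (N:ℝ) N) := by
      have h0 : (Nat.factorial N : ℝ)
          = (∫ t in (0:ℝ)..(N:ℝ), t ^ N * Real.exp (-t))
            + (Nat.factorial N : ℝ) * poissonLE (N:ℝ) N := by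
        rw [← keyN, ← split0, key0, hpLE0, mul_one]
      rw [← keyN, splitN, ← hrefl]
      rw [← keyN, splitN, ← hrefl] at h0
      linarith
    nlinarith [lt2, hfacN]
end

section
/- For every integer m ≥ 1, P(Po(m) < m) − P(Po(m+1) < m+1) = ∫_m^{m+1} ( t^m e^{−t} − m^m e^{−m} ) / m! dt. -/
open Finset MeasureTheory intervalIntegral

lemma hasDerivAt_G (n : ℕ) (t : ℝ) :
    HasDerivAt (fun s => Real.exp (-s) * ∑ k ∈ Finset.range (n+1), s ^ k / (Nat.factorial k : ℝ))
      (-(Real.exp (-t) * t ^ n / (Nat.factorial n : ℝ))) t := by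
  have hexp : HasDerivAt (fun s : ℝ => Real.exp (-s)) (-Real.exp (-t)) t := by
    simpa using (hasDerivAt_neg t).exp
  induction n with
  | zero =>
      simpa using hexp
  | succ n ih =>
      have hterm : HasDerivAt (fun s : ℝ => Real.exp (-s) * (s ^ (n+1) / (Nat.factorial (n+1) : ℝ)))
          ((-Real.exp (-t)) * (t ^ (n+1) / (Nat.factorial (n+1) : ℝ))
            + Real.exp (-t) * ((↑(n+1) * t ^ n) / (Nat.factorial (n+1) : ℝ))) t := by
        exact hexp.mul ((hasDerivAt_pow (n+1) t).div_const _)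
      have h : HasDerivAt (fun s : ℝ => Real.exp (-s) * ∑ k ∈ Finset.range (n+1), s ^ k / (Nat.factorial k : ℝ)
            + Real.exp (-s) * (s ^ (n+1) / (Nat.factorial (n+1) : ℝ)))
          (-(Real.exp (-t) * t ^ n / (Nat.factorial n : ℝ)) + ((-Real.exp (-t)) * (t ^ (n+1) / (Nat.factorial (n+1) : ℝ))
            + Real.exp (-t) * ((↑(n+1) * t ^ n) / (Nat.factorial (n+1) : ℝ)))) t := ih.add hterm
      convert h using 1
      · funext s
        rw [Finset.sum_range_succ, mul_add]
      · have hfac : (Nat.factorial (n+1) : ℝ) = (n+1) * Nat.factorial n := by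
          push_cast [Nat.factorial_succ]; ring
        have h1 : (Nat.factorial n : ℝ) ≠ 0 := Nat.cast_ne_zero.mpr (Nat.factorial_ne_zero n)
        have h2 : ((n:ℝ)+1) ≠ 0 := by positivity
        rw [hfac]
        field_simp
        push_cast
        ring

theorem stmt11 (m : ℕ) (hm : 1 ≤ m) :
    poissonLT m m - poissonLT (m + 1) (m + 1)
      = ∫ t in (m : ℝ)..((m : ℝ) + 1),
          (t ^ m * Real.exp (-t) - (m : ℝ) ^ m * Real.exp (-(m : ℝ))) / (Nat.factorial m : ℝ) := by
  set G : ℝ → ℝ := fun s => Real.exp (-s) * ∑ k ∈ Finset.range (m+1), s ^ k / (Nat.factorial k : ℝ)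
  have hderiv : ∀ t ∈ Set.uIcc (m : ℝ) ((m:ℝ)+1),
      HasDerivAt G (-(Real.exp (-t) * t ^ m / (Nat.factorial m : ℝ))) t :=
    fun t _ => hasDerivAt_G m t
  have hcont : Continuous (fun t : ℝ => -(Real.exp (-t) * t ^ m / (Nat.factorial m : ℝ))) := by
    continuity
  have hint := intervalIntegral.integral_eq_sub_of_hasDerivAt hderiv
    (hcont.intervalIntegrable _ _)
  -- hint : ∫ derivative = G (m+1) - G m
  have hconst : Continuous (fun _ : ℝ => (m : ℝ) ^ m * Real.exp (-(m : ℝ)) / (Nat.factorial m : ℝ)) :=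
    continuous_const
  have hcont2 : Continuous (fun t : ℝ => t ^ m * Real.exp (-t) / (Nat.factorial m : ℝ)) := by
    continuity
  have hsplit : (∫ t in (m : ℝ)..((m : ℝ) + 1),
        (t ^ m * Real.exp (-t) - (m : ℝ) ^ m * Real.exp (-(m : ℝ))) / (Nat.factorial m : ℝ))
      = (∫ t in (m : ℝ)..((m : ℝ) + 1), t ^ m * Real.exp (-t) / (Nat.factorial m : ℝ))
        - (∫ t in (m : ℝ)..((m : ℝ) + 1), (m : ℝ) ^ m * Real.exp (-(m : ℝ)) / (Nat.factorial m : ℝ)) := by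
    rw [← intervalIntegral.integral_sub (hcont2.intervalIntegrable _ _) (hconst.intervalIntegrable _ _)]
    congr 1; funext t; ring
  have hI1 : (∫ t in (m : ℝ)..((m : ℝ) + 1), t ^ m * Real.exp (-t) / (Nat.factorial m : ℝ))
      = G m - G ((m:ℝ)+1) := by
    have : (∫ t in (m : ℝ)..((m : ℝ) + 1), -(Real.exp (-t) * t ^ m / (Nat.factorial m : ℝ)))
        = G ((m:ℝ)+1) - G m := hint
    rw [intervalIntegral.integral_neg] at this
    have h2 : (∫ t in (m : ℝ)..((m : ℝ) + 1), Real.exp (-t) * t ^ m / (Nat.factorial m : ℝ))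
        = G m - G ((m:ℝ)+1) := by linarith
    rw [← h2]; congr 1; funext t; ring
  have hI2 : (∫ t in (m : ℝ)..((m : ℝ) + 1), (m : ℝ) ^ m * Real.exp (-(m : ℝ)) / (Nat.factorial m : ℝ))
      = (m : ℝ) ^ m * Real.exp (-(m : ℝ)) / (Nat.factorial m : ℝ) := by
    simp
  rw [hsplit, hI1, hI2]
  have hG1 : poissonLT m m = G m - Real.exp (-(m:ℝ)) * ((m:ℝ) ^ m / (Nat.factorial m : ℝ)) := by
    simp only [poissonLT, G, Finset.sum_range_succ, mul_add]
    ring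
  have hG2 : poissonLT (m + 1) (m + 1) = G ((m:ℝ)+1) := by
    simp only [poissonLT, G]
  rw [hG1, hG2]
  ring
end

section
/- For every integer m ≥ 1, P(Po(m) ≤ m) − P(Po(m+1) ≤ m+1) = ∫_m^{m+1} ( t^{m+1} e^{−t} − m^{m+1} e^{−m} ) / (m+1)! dt. -/
open Finset MeasureTheory intervalIntegral

lemma poissonLE_hasDerivAt (n : ℕ) (t : ℝ) :
    HasDerivAt (fun x : ℝ => poissonLE x n)
      (-(Real.exp (-t) * t ^ n / (Nat.factorial n : ℝ))) t := by
  have hexp : HasDerivAt (fun x : ℝ => Real.exp (-x)) (-Real.exp (-t)) t := by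
    simpa [Function.comp_def] using (Real.hasDerivAt_exp (-t)).comp t (hasDerivAt_neg t)
  have hsum : HasDerivAt (fun x : ℝ => ∑ k ∈ Finset.range (n + 1), x ^ k / (Nat.factorial k : ℝ))
      (∑ k ∈ Finset.range n, t ^ k / (Nat.factorial k : ℝ)) t := by
    have h := HasDerivAt.fun_sum (fun k (_ : k ∈ Finset.range (n+1)) =>
      (hasDerivAt_pow k t).div_const (Nat.factorial k : ℝ))
    convert h using 1
    · rfl
    · rfl
    rw [Finset.sum_range_succ' (fun k => (k:ℝ) * t ^ (k-1) / (Nat.factorial k : ℝ)) n]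
    simp only [Nat.cast_zero, zero_mul, zero_div, add_zero]
    apply Finset.sum_congr rfl
    intro k _
    rw [Nat.factorial_succ]
    have hk : (Nat.factorial k : ℝ) ≠ 0 := by positivity
    push_cast
    field_simp
  have h := hexp.mul hsum
  unfold poissonLE
  convert h using 1
  · rfl
  · rfl
  · rfl
  rw [Finset.sum_range_succ]
  ring

theorem stmt12 (m : ℕ) (hm : 1 ≤ m) :
    poissonLE m m - poissonLE (m + 1) (m + 1)
      = ∫ t in (m : ℝ)..((m : ℝ) + 1),
          (t ^ (m + 1) * Real.exp (-t) - (m : ℝ) ^ (m + 1) * Real.exp (-(m : ℝ)))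
            / (Nat.factorial (m + 1) : ℝ) := by
  set n := m + 1 with hn
  have hD : (0:ℝ) < (Nat.factorial n : ℝ) := by positivity
  have hcont : Continuous (fun t : ℝ => Real.exp (-t) * t ^ n / (Nat.factorial n : ℝ)) := by
    continuity
  have hftc : (∫ t in (m:ℝ)..((m:ℝ)+1), -(Real.exp (-t) * t ^ n / (Nat.factorial n : ℝ)))
      = poissonLE ((m:ℝ)+1) n - poissonLE (m:ℝ) n :=
    intervalIntegral.integral_eq_sub_of_hasDerivAt
      (fun t _ => poissonLE_hasDerivAt n t) (hcont.neg.intervalIntegrable _ _)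
  have hsplit : (∫ t in (m:ℝ)..((m:ℝ)+1),
        (t ^ n * Real.exp (-t) - (m : ℝ) ^ n * Real.exp (-(m : ℝ)))
          / (Nat.factorial n : ℝ))
      = (∫ t in (m:ℝ)..((m:ℝ)+1), t ^ n * Real.exp (-t) / (Nat.factorial n : ℝ))
        - (∫ t in (m:ℝ)..((m:ℝ)+1), (m : ℝ) ^ n * Real.exp (-(m : ℝ)) / (Nat.factorial n : ℝ)) := by
    rw [← intervalIntegral.integral_sub]
    · congr 1; funext t; ring
    · exact (by continuity : Continuous fun t : ℝ => t ^ n * Real.exp (-t) / (Nat.factorial n : ℝ)).intervalIntegrable _ _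
    · exact intervalIntegrable_const
  have h1 : (∫ t in (m:ℝ)..((m:ℝ)+1), t ^ n * Real.exp (-t) / (Nat.factorial n : ℝ))
      = poissonLE (m:ℝ) n - poissonLE ((m:ℝ)+1) n := by
    have : (∫ t in (m:ℝ)..((m:ℝ)+1), t ^ n * Real.exp (-t) / (Nat.factorial n : ℝ))
        = -(∫ t in (m:ℝ)..((m:ℝ)+1), -(Real.exp (-t) * t ^ n / (Nat.factorial n : ℝ))) := by
      rw [← intervalIntegral.integral_neg]
      congr 1; funext t; ring
    rw [this, hftc]; ring
  have h2 : (∫ t in (m:ℝ)..((m:ℝ)+1), (m : ℝ) ^ n * Real.exp (-(m : ℝ)) / (Nat.factorial n : ℝ))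
      = (m : ℝ) ^ n * Real.exp (-(m : ℝ)) / (Nat.factorial n : ℝ) := by
    rw [intervalIntegral.integral_const]
    simp
  have hexpand : poissonLE (m:ℝ) n
      = poissonLE (m:ℝ) m + Real.exp (-(m:ℝ)) * ((m:ℝ) ^ n / (Nat.factorial n : ℝ)) := by
    unfold poissonLE
    rw [hn, Finset.sum_range_succ (fun k => (m:ℝ) ^ k / (Nat.factorial k : ℝ)) (m + 1)]
    ring
  have : poissonLE ((m:ℝ)+1) (m+1) = poissonLE ((m:ℕ)+1 : ℕ) (m+1) := by push_cast; ring_nf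
  rw [hsplit, h1, h2, hexpand]
  push_cast
  ring
end
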